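/- Let L = { u s^k w t^k : k ≥ 0 } for finite words u, s, w, t over Σ with st ≠ ts. Then lcs(L) = lcs(uw, u s w t, u s s w t t), i.e., the longest common suffix of the whole infinite family is already attained by the three words with k = 0, 1, 2. -/
import Mathlib
set_option linter.unusedSectionVars false

variable {α : Type*} [DecidableEq α]

/-- Longest common prefix of two finite words. -/
def lcp : List α → List α → List α
  | a :: u, b :: v => if a = b then a :: lcp u v else []
  | _, _ => []

/-- Longest common suffix of two finite words. -/
def lcs (u v : List α) : List α := (lcp u.reverse v.reverse).reverse

/-- `wpow x k` is the `k`-fold concatenation `x^k`. -/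
def wpow (x : List α) (k : ℕ) : List α := (List.replicate k x).flatten

@[simp] theorem lcp_nil_left (y : List α) : lcp ([] : List α) y = [] := by cases y <;> rfl
@[simp] theorem lcp_nil_right (x : List α) : lcp x ([] : List α) = [] := by cases x <;> rfl
theorem lcp_cons_cons (a b : α) (u v : List α) :
    lcp (a :: u) (b :: v) = if a = b then a :: lcp u v else [] := rfl

theorem lcp_prefix_left : ∀ x y : List α, lcp x y <+: x := by
  intro x
  induction x with
  | nil => intro y; simp
  | cons a u ih =>
    intro y
    cases y with
    | nil => simp
    | cons b v =>
      rw [lcp_cons_cons]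
      split
      · next hab => exact List.cons_prefix_cons.mpr ⟨rfl, ih v⟩
      · exact List.nil_prefix

theorem lcp_prefix_right : ∀ x y : List α, lcp x y <+: y := by
  intro x
  induction x with
  | nil => intro y; simp
  | cons a u ih =>
    intro y
    cases y with
    | nil => simp
    | cons b v =>
      rw [lcp_cons_cons]
      split
      · next hab => exact List.cons_prefix_cons.mpr ⟨hab, ih v⟩
      · exact List.nil_prefix

theorem prefix_lcp : ∀ (z x y : List α), z <+: x → z <+: y → z <+: lcp x y := by
  intro z
  induction z with
  | nil => intro x y _ _; exact List.nil_prefix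
  | cons c z' ih =>
    intro x y hx hy
    cases x with
    | nil => exact absurd (List.prefix_nil.mp hx) (by simp)
    | cons a x' =>
      cases y with
      | nil => exact absurd (List.prefix_nil.mp hy) (by simp)
      | cons b y' =>
        obtain ⟨rfl, hx'⟩ := List.cons_prefix_cons.mp hx
        obtain ⟨rfl, hy'⟩ := List.cons_prefix_cons.mp hy
        rw [lcp_cons_cons, if_pos rfl]
        exact List.cons_prefix_cons.mpr ⟨rfl, ih _ _ hx' hy'⟩

theorem prefix_antisymm {p q : List α} (h1 : p <+: q) (h2 : q <+: p) : p = q :=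
  h1.eq_of_length (le_antisymm h1.length_le h2.length_le)

theorem lcp_comm : ∀ x y : List α, lcp x y = lcp y x := by
  intro x
  induction x with
  | nil => intro y; simp
  | cons a u ih =>
    intro y
    cases y with
    | nil => simp
    | cons b v =>
      rw [lcp_cons_cons, lcp_cons_cons]
      by_cases hab : a = b
      · subst hab; rw [if_pos rfl, if_pos rfl, ih]
      · rw [if_neg hab, if_neg (Ne.symm hab)]

theorem lcp_len_comm (x y : List α) : (lcp x y).length = (lcp y x).length := by rw [lcp_comm]

theorem lcp_self (x : List α) : lcp x x = x :=
  prefix_antisymm (lcp_prefix_left x x) (prefix_lcp x x x List.prefix_rfl List.prefix_rfl)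

theorem lcp_append : ∀ (p x y : List α), lcp (p ++ x) (p ++ y) = p ++ lcp x y := by
  intro p
  induction p with
  | nil => intro x y; simp
  | cons a p ih =>
    intro x y
    simp only [List.cons_append]
    rw [lcp_cons_cons, if_pos rfl, ih]

theorem lcp_ultra (x y z : List α) :
    min (lcp x y).length (lcp y z).length ≤ (lcp x z).length := by
  rcases List.prefix_or_prefix_of_prefix (lcp_prefix_right x y) (lcp_prefix_left y z) with h | h
  · have : lcp x y <+: lcp x z :=
      prefix_lcp _ _ _ (lcp_prefix_left x y) (h.trans (lcp_prefix_right y z))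
    exact le_trans (min_le_left _ _) this.length_le
  · have : lcp y z <+: lcp x z :=
      prefix_lcp _ _ _ (h.trans (lcp_prefix_left x y)) (lcp_prefix_right y z)
    exact le_trans (min_le_right _ _) this.length_le

theorem lcp_eq_left {x y z : List α} (h : (lcp x y).length < (lcp y z).length) :
    lcp x z = lcp x y := by
  have h1 : lcp x y <+: lcp y z :=
    List.prefix_of_prefix_length_le (lcp_prefix_right x y) (lcp_prefix_left y z) h.le
  have hxz : lcp x y <+: lcp x z :=
    prefix_lcp _ _ _ (lcp_prefix_left x y) (h1.trans (lcp_prefix_right y z))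
  have hlen : (lcp x z).length ≤ (lcp x y).length := by
    by_contra hc
    push_neg at hc
    have hu := lcp_ultra x z y
    have hc2 : (lcp z y).length = (lcp y z).length := lcp_len_comm z y
    omega
  exact prefix_antisymm
    (List.prefix_of_prefix_length_le (lcp_prefix_left x z) (lcp_prefix_left x y) hlen) hxz

theorem lcp_eq_right {x y z : List α} (h : (lcp y z).length < (lcp x y).length) :
    lcp x z = lcp y z := by
  have h' : (lcp z y).length < (lcp y x).length := by
    rw [lcp_len_comm z y, lcp_len_comm y x]; exact h
  have := lcp_eq_left (x := z) (y := y) (z := x) h'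
  rw [lcp_comm x z, lcp_comm y z]
  exact this

theorem lcp_stab (x a b : List α) (hab : a <+: b) (hx : x.length ≤ a.length) :
    lcp x a = lcp x b := by
  have h1 : lcp x a <+: lcp x b :=
    prefix_lcp _ _ _ (lcp_prefix_left x a) ((lcp_prefix_right x a).trans hab)
  have h2 : lcp x b <+: a :=
    List.prefix_of_prefix_length_le (lcp_prefix_right x b) hab
      (le_trans (lcp_prefix_left x b).length_le hx)
  exact prefix_antisymm h1 (prefix_lcp _ _ _ (lcp_prefix_left x b) h2)

@[simp] theorem wpow_zero (x : List α) : wpow x 0 = [] := rfl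
theorem wpow_succ (x : List α) (k : ℕ) : wpow x (k + 1) = x ++ wpow x k := rfl
theorem wpow_add (x : List α) (m n : ℕ) : wpow x (m + n) = wpow x m ++ wpow x n := by
  induction m with
  | zero => simp
  | succ m ih => rw [Nat.succ_add, wpow_succ, ih, wpow_succ, List.append_assoc]
theorem wpow_one (x : List α) : wpow x 1 = x := by
  rw [wpow_succ, wpow_zero, List.append_nil]
theorem wpow_succ' (x : List α) (k : ℕ) : wpow x (k + 1) = wpow x k ++ x := by
  rw [wpow_add, wpow_one]
@[simp] theorem length_wpow (x : List α) (k : ℕ) : (wpow x k).length = k * x.length := by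
  induction k with
  | zero => simp
  | succ k ih => rw [wpow_succ, List.length_append, ih]; ring
theorem reverse_wpow (x : List α) (k : ℕ) : (wpow x k).reverse = wpow x.reverse k := by
  induction k with
  | zero => simp
  | succ k ih => rw [wpow_succ, List.reverse_append, ih, wpow_succ']
theorem wpow_prefix (x : List α) {j N : ℕ} (h : j ≤ N) : wpow x j <+: wpow x N := by
  rw [show N = j + (N - j) by omega, wpow_add]
  exact List.prefix_append _ _

theorem lcp_wpow_strip (T x : List α) {j N : ℕ} (hjN : j ≤ N)
    (hx : x.length ≤ (N - j) * T.length) :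
    lcp (wpow T j ++ x) (wpow T N) = wpow T j ++ lcp x (wpow T N) := by
  have hsplit : wpow T N = wpow T j ++ wpow T (N - j) := by
    rw [← wpow_add, Nat.add_sub_cancel' hjN]
  conv_lhs => rw [hsplit]
  rw [lcp_append]
  congr 1
  exact lcp_stab x _ _ (wpow_prefix T (Nat.sub_le N j)) (by rwa [length_wpow])

theorem lcp_wpow_strip_len (T x : List α) {j N : ℕ} (hjN : j ≤ N)
    (hx : x.length ≤ (N - j) * T.length) :
    (lcp (wpow T j ++ x) (wpow T N)).length = j * T.length + (lcp x (wpow T N)).length := by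
  rw [lcp_wpow_strip T x hjN hx, List.length_append, length_wpow]
theorem lcp_core (d c : ℕ) (hd : 0 < d) (W S U Ω : List α) (hS : S ≠ [])
    (h0 : (lcp (W ++ U) Ω).length = c)
    (h1 : (lcp (W ++ (S ++ U)) Ω).length + d = c)
    (h2 : (lcp (W ++ (S ++ (S ++ U))) Ω).length + 2 * d = c) : False := by
  have hs : 0 < S.length := List.length_pos_iff.mpr hS
  -- W.length ≤ (lcp (W ++ (S ++ (S ++ U))) Ω).length
  have hw2 : W.length ≤ (lcp (W ++ (S ++ (S ++ U))) Ω).length := by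
    by_contra hc
    push_neg at hc
    have hxy : W.length ≤ (lcp (W ++ (S ++ U)) (W ++ (S ++ (S ++ U)))).length := by
      rw [lcp_append, List.length_append]; omega
    have heq := lcp_eq_right (x := W ++ (S ++ U)) (y := W ++ (S ++ (S ++ U))) (z := Ω)
      (lt_of_lt_of_le hc hxy)
    rw [heq] at h1
    omega
  -- W is a prefix of Ω
  have hWpre : W <+: Ω :=
    (List.prefix_of_prefix_length_le (List.prefix_append W U) (lcp_prefix_left _ _)
      (by omega)).trans (lcp_prefix_right _ _)
  obtain ⟨P, rfl⟩ := hWpre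
  rw [lcp_append, List.length_append] at h0 h1 h2
  -- S.length ≤ (lcp (S ++ (S ++ U)) P).length
  have hSa2 : S.length ≤ (lcp (S ++ (S ++ U)) P).length := by
    by_contra hc
    push_neg at hc
    have hxy : S.length ≤ (lcp (S ++ U) (S ++ (S ++ U))).length := by
      rw [lcp_append, List.length_append]; omega
    have heq := lcp_eq_right (x := S ++ U) (y := S ++ (S ++ U)) (z := P)
      (lt_of_lt_of_le hc hxy)
    rw [heq] at h1
    omega
  have hSP : S <+: P :=
    (List.prefix_of_prefix_length_le (List.prefix_append S (S ++ U)) (lcp_prefix_left _ _)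
      hSa2).trans (lcp_prefix_right _ _)
  obtain ⟨P₁, rfl⟩ := hSP
  rw [show lcp (S ++ U) (S ++ P₁) = S ++ lcp U P₁ from lcp_append S U P₁,
    List.length_append] at h1
  rw [show lcp (S ++ (S ++ U)) (S ++ P₁) = S ++ lcp (S ++ U) P₁ from lcp_append S (S ++ U) P₁,
    List.length_append] at h2
  -- first transfer: lcp (S ++ P₁) P₁ = lcp U P₁
  have e1 : lcp (S ++ P₁) P₁ = lcp U P₁ := by
    apply lcp_eq_right (x := S ++ P₁) (y := U) (z := P₁)
    rw [lcp_len_comm (S ++ P₁) U]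
    omega
  have e2 : lcp (S ++ U) P₁ = lcp (S ++ P₁) P₁ := by
    apply lcp_eq_right (x := S ++ U) (y := S ++ P₁) (z := P₁)
    rw [e1, show lcp (S ++ U) (S ++ P₁) = S ++ lcp U P₁ from lcp_append S U P₁,
      List.length_append]
    omega
  rw [e2, e1] at h2
  omega
def Yw (T S W U : List α) (j : ℕ) : List α := wpow T j ++ (W ++ (wpow S j ++ U))
def Zw (S W U : List α) (j : ℕ) : List α := W ++ (wpow S j ++ U)
def Rw (S U : List α) (j : ℕ) : List α := wpow S j ++ U

theorem key_lemma (T S W U : List α) (hT : T ≠ []) (hS : S ≠ []) (m : ℕ) :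
    min (lcp (Yw T S W U 0) (Yw T S W U 1)).length (lcp (Yw T S W U 0) (Yw T S W U 2)).length
      ≤ (lcp (Yw T S W U 0) (Yw T S W U m)).length := by
  by_contra hcon
  push_neg at hcon
  rw [lt_min_iff] at hcon
  obtain ⟨h1, h2⟩ := hcon
  have ht : 0 < T.length := List.length_pos_iff.mpr hT
  have hs : 0 < S.length := List.length_pos_iff.mpr hS
  -- m ≥ 1
  rcases Nat.eq_zero_or_pos m with rfl | hm
  · have hle := (lcp_prefix_left (Yw T S W U 0) (Yw T S W U 1)).length_le
    rw [lcp_self] at h1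
    omega
  obtain ⟨m', rfl⟩ : ∃ m', m = m' + 1 := ⟨m - 1, by omega⟩
  set N := m' + 1 + W.length + (m' + 1 + 2) * S.length + U.length + 2 with hN
  have hmadd : (m' + 1 + 2) * S.length = (m' + 1) * S.length + 2 * S.length := by ring
  have hms : S.length ≤ (m' + 1) * S.length := by
    calc S.length = 1 * S.length := (one_mul _).symm
    _ ≤ (m' + 1) * S.length := Nat.mul_le_mul_right _ hm
  have hmT : T.length ≤ (m' + 1) * T.length := by
    calc T.length = 1 * T.length := (one_mul _).symm
    _ ≤ (m' + 1) * T.length := Nat.mul_le_mul_right _ hm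
  have hZlen : ∀ j, (Zw S W U j).length = W.length + (j * S.length + U.length) := by
    intro j; simp [Zw, List.length_append, length_wpow]
  have hmul : ∀ j : ℕ, j ≤ N → (Zw S W U j).length ≤ N - j →
      (lcp (Yw T S W U j) (wpow T N)).length
        = j * T.length + (lcp (Zw S W U j) (wpow T N)).length := by
    intro j hjN hlen
    exact lcp_wpow_strip_len T _ hjN (le_trans hlen (Nat.le_mul_of_pos_right _ ht))
  have hstrip1 : (lcp (Yw T S W U 1) (wpow T N)).length
      = 1 * T.length + (lcp (Zw S W U 1) (wpow T N)).length := by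
    apply hmul 1 (by omega)
    rw [hZlen]; omega
  have hstrip2 : (lcp (Yw T S W U 2) (wpow T N)).length
      = 2 * T.length + (lcp (Zw S W U 2) (wpow T N)).length := by
    apply hmul 2 (by omega)
    rw [hZlen]; omega
  have hstripm : (lcp (Yw T S W U (m' + 1)) (wpow T N)).length
      = (m' + 1) * T.length + (lcp (Zw S W U (m' + 1)) (wpow T N)).length := by
    apply hmul (m' + 1) (by omega)
    rw [hZlen]; omega
  have hY0 : Yw T S W U 0 = W ++ U := rfl
  have hZ1 : Zw S W U 1 = W ++ (S ++ U) := by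
    show W ++ (wpow S 1 ++ U) = _
    rw [wpow_one]
  have hZ2 : Zw S W U 2 = W ++ (S ++ (S ++ U)) := by
    show W ++ (wpow S 2 ++ U) = _
    rw [show wpow S 2 = S ++ wpow S 1 from wpow_succ S 1, wpow_one, List.append_assoc]
  rcases le_or_gt (lcp (Yw T S W U 0) (wpow T N)).length
      (lcp (Yw T S W U 0) (Yw T S W U (m' + 1))).length with hcle | hcgt
  · -- LOW case : the lcp of Y0 with the long power is short
    have hY1Ω : lcp (Yw T S W U 1) (wpow T N) = lcp (Yw T S W U 0) (wpow T N) := by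
      apply lcp_eq_right
      rw [lcp_len_comm (Yw T S W U 1) (Yw T S W U 0)]
      omega
    have hY2Ω : lcp (Yw T S W U 2) (wpow T N) = lcp (Yw T S W U 0) (wpow T N) := by
      apply lcp_eq_right
      rw [lcp_len_comm (Yw T S W U 2) (Yw T S W U 0)]
      omega
    apply lcp_core T.length ((lcp (Yw T S W U 0) (wpow T N)).length) ht W S U (wpow T N) hS
    · rw [← hY0]
    · rw [← hZ1]
      rw [hY1Ω] at hstrip1
      omega
    · rw [← hZ2]
      rw [hY2Ω] at hstrip2
      omega
  · -- HIGH case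
    have hYmΩ : lcp (Yw T S W U (m' + 1)) (wpow T N) = lcp (Yw T S W U (m' + 1)) (Yw T S W U 0) := by
      apply lcp_eq_left
      rw [lcp_len_comm (Yw T S W U (m' + 1)) (Yw T S W U 0)]
      omega
    have hYmΩlen : (lcp (Yw T S W U (m' + 1)) (wpow T N)).length
        = (lcp (Yw T S W U 0) (Yw T S W U (m' + 1))).length := by
      rw [hYmΩ, lcp_len_comm (Yw T S W U (m' + 1)) (Yw T S W U 0)]
    have hY1Ω : (lcp (Yw T S W U 0) (Yw T S W U (m' + 1))).length + 1
        ≤ (lcp (Yw T S W U 1) (wpow T N)).length := by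
      have hu := lcp_ultra (Yw T S W U 1) (Yw T S W U 0) (wpow T N)
      have hc2 := lcp_len_comm (Yw T S W U 1) (Yw T S W U 0)
      omega
    -- em < e1
    have hemlt : (lcp (Zw S W U (m' + 1)) (wpow T N)).length < (lcp (Zw S W U 1) (wpow T N)).length := by
      omega
    -- W.length ≤ em
    have hwem : W.length ≤ (lcp (Zw S W U (m' + 1)) (wpow T N)).length := by
      by_contra hc
      push_neg at hc
      have hxy : W.length ≤ (lcp (Zw S W U 1) (Zw S W U (m' + 1))).length :=
        (prefix_lcp W _ _ (List.prefix_append W _) (List.prefix_append W _)).length_le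
      have heq := lcp_eq_right (x := Zw S W U 1) (y := Zw S W U (m' + 1)) (z := wpow T N)
        (lt_of_lt_of_le hc hxy)
      rw [heq] at hemlt
      omega
    -- W is a prefix of the power
    have hWΩ : W <+: wpow T N := by
      refine (List.prefix_of_prefix_length_le ?_ (lcp_prefix_left (Yw T S W U 0) (wpow T N)) ?_).trans
        (lcp_prefix_right _ _)
      · rw [hY0]; exact List.prefix_append W U
      · omega
    obtain ⟨P, hP⟩ := hWΩ
    have hsplitZ : ∀ j, lcp (Zw S W U j) (wpow T N) = W ++ lcp (Rw S U j) P := by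
      intro j
      rw [← hP]
      exact lcp_append W _ P
    have hsplit0 : lcp (Yw T S W U 0) (wpow T N) = W ++ lcp (Rw S U 0) P := by
      rw [hY0, ← hP]
      exact lcp_append W U P
    have hlen0 : (lcp (Yw T S W U 0) (wpow T N)).length
        = W.length + (lcp (Rw S U 0) P).length := by
      rw [hsplit0, List.length_append]
    have hlen1 : (lcp (Zw S W U 1) (wpow T N)).length
        = W.length + (lcp (Rw S U 1) P).length := by
      rw [hsplitZ 1, List.length_append]
    have hlenm : (lcp (Zw S W U (m' + 1)) (wpow T N)).length
        = W.length + (lcp (Rw S U (m' + 1)) P).length := by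
      rw [hsplitZ (m' + 1), List.length_append]
    -- bm < b1, bm < b0
    have hbmb1 : (lcp (Rw S U (m' + 1)) P).length < (lcp (Rw S U 1) P).length := by omega
    have hb0gt : (lcp (Rw S U (m' + 1)) P).length < (lcp (Rw S U 0) P).length := by omega
    -- S.length ≤ bm
    have hR1 : Rw S U 1 = S ++ U := by
      show wpow S 1 ++ U = _
      rw [wpow_one]
    have hRm : Rw S U (m' + 1) = S ++ (wpow S m' ++ U) := by
      show wpow S (m' + 1) ++ U = _
      rw [wpow_succ, List.append_assoc]
    have hSbm : S.length ≤ (lcp (Rw S U (m' + 1)) P).length := by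
      by_contra hc
      push_neg at hc
      have hxy : S.length ≤ (lcp (Rw S U 1) (Rw S U (m' + 1))).length := by
        refine (prefix_lcp S _ _ ?_ ?_).length_le
        · rw [hR1]; exact List.prefix_append S U
        · rw [hRm]; exact List.prefix_append S _
      have heq := lcp_eq_right (x := Rw S U 1) (y := Rw S U (m' + 1)) (z := P)
        (lt_of_lt_of_le hc hxy)
      rw [heq] at hbmb1
      omega
    have hSP : S <+: P := by
      refine (List.prefix_of_prefix_length_le ?_ (lcp_prefix_left (Rw S U (m' + 1)) P) hSbm).trans
        (lcp_prefix_right _ _)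
      rw [hRm]; exact List.prefix_append S _
    obtain ⟨P₁, hP₁⟩ := hSP
    have hrec : ∀ j, lcp (Rw S U (j + 1)) P = S ++ lcp (Rw S U j) P₁ := by
      intro j
      rw [← hP₁]
      have hRj : Rw S U (j + 1) = S ++ Rw S U j := by
        show wpow S (j + 1) ++ U = _
        rw [wpow_succ, List.append_assoc]
        rfl
      rw [hRj]
      exact lcp_append S _ P₁
    rcases le_or_gt (lcp (Rw S U 0) P).length (lcp P P₁).length with hDge | hDlt
    · -- monotone case
      have mono : ∀ j, (lcp (Rw S U 0) P).length ≤ (lcp (Rw S U j) P).length := by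
        intro j
        induction j with
        | zero => exact le_refl _
        | succ j ih =>
          have hu := lcp_ultra (Rw S U j) P P₁
          have hlen : (lcp (Rw S U (j + 1)) P).length
              = S.length + (lcp (Rw S U j) P₁).length := by
            rw [hrec j, List.length_append]
          omega
      have := mono (m' + 1)
      omega
    · -- stabilizing case
      have hUP₁ : lcp (Rw S U 0) P₁ = lcp P P₁ :=
        lcp_eq_right (x := Rw S U 0) (y := P) (z := P₁) hDlt
      have hstep : ∀ j, (lcp (Rw S U (j + 1)) P).length = S.length + (lcp P P₁).length := by
        intro j
        induction j with
        | zero => rw [hrec 0, List.length_append, hUP₁]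
        | succ j ih =>
          have heq : lcp (Rw S U (j + 1)) P₁ = lcp P P₁ := by
            apply lcp_eq_right (x := Rw S U (j + 1)) (y := P) (z := P₁)
            omega
          rw [hrec (j + 1), List.length_append, heq]
      have hh1 : (lcp (Rw S U 1) P).length = S.length + (lcp P P₁).length := hstep 0
      have hhm := hstep m'
      omega
theorem main_prefix (T S W U : List α) (hT : T ≠ []) (hS : S ≠ []) (k : ℕ) :
    lcp (lcp (Yw T S W U 0) (Yw T S W U 1)) (Yw T S W U 2) <+: Yw T S W U k := by
  have key := key_lemma T S W U hT hS k
  have hQ0 : lcp (lcp (Yw T S W U 0) (Yw T S W U 1)) (Yw T S W U 2) <+: Yw T S W U 0 :=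
    (lcp_prefix_left _ _).trans (lcp_prefix_left _ _)
  have hQlen : (lcp (lcp (Yw T S W U 0) (Yw T S W U 1)) (Yw T S W U 2)).length
      ≤ (lcp (Yw T S W U 0) (Yw T S W U k)).length := by
    refine le_trans ?_ key
    rw [le_min_iff]
    exact ⟨(lcp_prefix_left _ _).length_le,
      (prefix_lcp _ _ _ hQ0 (lcp_prefix_right _ _)).length_le⟩
  exact (List.prefix_of_prefix_length_le hQ0 (lcp_prefix_left _ _) hQlen).trans
    (lcp_prefix_right _ _)

/-- `R` is the longest common suffix of the language `L`. -/
def IsLCS (L : Set (List α)) (R : List α) : Prop :=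
  (∀ w ∈ L, R <:+ w) ∧ ∀ s : List α, (∀ w ∈ L, s <:+ w) → s <:+ R

theorem lcs_pumping (u s w t : List α) (h : s ++ t ≠ t ++ s) :
    IsLCS {x | ∃ k, x = u ++ wpow s k ++ w ++ wpow t k}
      (lcs (lcs (u ++ w) (u ++ s ++ w ++ t)) (u ++ s ++ s ++ w ++ t ++ t)) := by
  have hs : s ≠ [] := by rintro rfl; simp at h
  have ht : t ≠ [] := by rintro rfl; simp at h
  have hS : s.reverse ≠ [] := by simpa using hs
  have hT : t.reverse ≠ [] := by simpa using ht
  have hrev : ∀ k, (u ++ wpow s k ++ w ++ wpow t k).reverse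
      = Yw t.reverse s.reverse w.reverse u.reverse k := by
    intro k
    simp [Yw, List.reverse_append, reverse_wpow, List.append_assoc]
  have e0 : (u ++ w).reverse = Yw t.reverse s.reverse w.reverse u.reverse 0 := by
    simp [Yw, wpow]
  have e1 : (u ++ s ++ w ++ t).reverse = Yw t.reverse s.reverse w.reverse u.reverse 1 := by
    simp [Yw, wpow_one, List.reverse_append, List.append_assoc]
  have e2 : (u ++ s ++ s ++ w ++ t ++ t).reverse
      = Yw t.reverse s.reverse w.reverse u.reverse 2 := by
    simp [Yw, show wpow t.reverse 2 = t.reverse ++ wpow t.reverse 1 from wpow_succ _ 1,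
      show wpow s.reverse 2 = s.reverse ++ wpow s.reverse 1 from wpow_succ _ 1,
      wpow_one, List.reverse_append, List.append_assoc]
  have hR : (lcs (lcs (u ++ w) (u ++ s ++ w ++ t)) (u ++ s ++ s ++ w ++ t ++ t)).reverse
      = lcp (lcp (Yw t.reverse s.reverse w.reverse u.reverse 0)
          (Yw t.reverse s.reverse w.reverse u.reverse 1))
          (Yw t.reverse s.reverse w.reverse u.reverse 2) := by
    simp only [lcs, List.reverse_reverse]
    rw [e0, e1, e2]
  constructor
  · rintro x ⟨k, rfl⟩
    rw [← List.reverse_prefix, hR, hrev k]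
    exact main_prefix _ _ _ _ hT hS k
  · intro z hz
    have h0 : z <:+ u ++ w := hz _ ⟨0, by simp [wpow]⟩
    have h1 : z <:+ u ++ s ++ w ++ t := hz _ ⟨1, by simp [wpow_one, wpow]⟩
    have h2 : z <:+ u ++ s ++ s ++ w ++ t ++ t := hz _ ⟨2, by
      simp [show wpow s 2 = s ++ wpow s 1 from wpow_succ _ 1,
        show wpow t 2 = t ++ wpow t 1 from wpow_succ _ 1, wpow_one, List.append_assoc]⟩
    rw [← List.reverse_prefix] at h0 h1 h2 ⊢
    rw [hR]
    rw [e0] at h0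
    rw [e1] at h1
    rw [e2] at h2
    exact prefix_lcp _ _ _ (prefix_lcp _ _ _ h0 h1) h2
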